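/- Let Ω₁ ⊂ ℍ_s^n be real-path-connected, let Ω₂ ⊂ ℍ_s^n be Ω₁-stem-preserving, let c ∈ ℍ, let f : Ω₂ → ℍ be path-slice, let γ ∈ 𝒫(ℂ^n, Ω₁), let I ∈ 𝕊(Ω₁, γ), and set q := γ^I(1). Then c·conj(F^{f,1}_{Ω₁}(γ)) + I·c·conj(F^{f,2}_{Ω₁}(γ)) = c·conj(F^{f,1}_{Ω₁}(γ̄)) − I·c·conj(F^{f,2}_{Ω₁}(γ̄)) = c·conj(ℱ^{f,1}_{Ω₁}(q)) + 𝕴(q)·c·conj(ℱ^{f,2}_{Ω₁}(q)), where γ̄ denotes the componentwise complex-conjugate path t ↦ conj(γ(t)). -/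

import Mathlib

open scoped Quaternion
open Classical

attribute [local instance] Classical.propDecidable

noncomputable section

/-- Continuous-path carrier type: maps from `[0,1]` to `ℂⁿ`. -/
abbrev PathC (n : ℕ) := unitInterval → (Fin n → ℂ)

/-- The sphere of quaternionic imaginary units `𝕊 = {I : I² = -1}`. -/
def SQ : Set ℍ[ℝ] := {I | I ^ 2 = -1}

/-- A quaternion is real if it is the image of a real number. -/
def IsRealQ (p : ℍ[ℝ]) : Prop := ∃ r : ℝ, p = (r : ℍ[ℝ])

/-- `Ψ_i^I : ℂⁿ → ℂ_Iⁿ`, componentwise `x + y i ↦ x + y I`. -/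
def psi {n : ℕ} (I : ℍ[ℝ]) (z : Fin n → ℂ) : Fin n → ℍ[ℝ] :=
  fun k => ((z k).re : ℍ[ℝ]) + (z k).im • I

/-- The slice `ℂ_I = {x + y I}` as a subset of the quaternions. -/
def CI (I : ℍ[ℝ]) : Set ℍ[ℝ] := {p | ∃ x y : ℝ, p = (x : ℍ[ℝ]) + y • I}

/-- The weakly slice cone `ℍ_sⁿ = ⋃_{I ∈ 𝕊} ℂ_Iⁿ`. -/
def HSliceCone (n : ℕ) : Set (Fin n → ℍ[ℝ]) := ⋃ I ∈ SQ, Set.range (psi (n := n) I)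

/-- Membership in `𝒫(ℂⁿ)`: continuous with real initial point. -/
def IsPathP {n : ℕ} (γ : PathC n) : Prop :=
  Continuous γ ∧ ∀ k, ((γ 0) k).im = 0

/-- `γ^I ⊂ Ω`. -/
def pathInSlice {n : ℕ} (Ω : Set (Fin n → ℍ[ℝ])) (I : ℍ[ℝ]) (γ : PathC n) : Prop :=
  ∀ t, psi I (γ t) ∈ Ω

/-- `𝕊(Ω, γ) = {I ∈ 𝕊 : γ^I ⊂ Ω}`. -/
def SGamma {n : ℕ} (Ω : Set (Fin n → ℍ[ℝ])) (γ : PathC n) : Set ℍ[ℝ] :=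
  {I | I ∈ SQ ∧ pathInSlice Ω I γ}

/-- `γ ∈ 𝒫(ℂⁿ, Ω)`. -/
def PathIn {n : ℕ} (Ω : Set (Fin n → ℍ[ℝ])) (γ : PathC n) : Prop :=
  IsPathP γ ∧ ∃ I, I ∈ SGamma Ω γ

/-- `F` is a path-slice stem function of `f` on `Ω`. -/
def IsStem {n : ℕ} (Ω : Set (Fin n → ℍ[ℝ])) (f : (Fin n → ℍ[ℝ]) → ℍ[ℝ])
    (F : PathC n → ℍ[ℝ] × ℍ[ℝ]) : Prop :=
  ∀ γ, PathIn Ω γ → ∀ I ∈ SGamma Ω γ, f (psi I (γ 1)) = (F γ).1 + I * (F γ).2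

/-- `f` is a path-slice function on `Ω`. -/
def PathSlice {n : ℕ} (Ω : Set (Fin n → ℍ[ℝ])) (f : (Fin n → ℍ[ℝ]) → ℍ[ℝ]) : Prop :=
  ∃ F, IsStem Ω f F

/-- `Ω` is real-path-connected. -/
def RealPathConnected {n : ℕ} (Ω : Set (Fin n → ℍ[ℝ])) : Prop :=
  ∀ q ∈ Ω, ∃ γ : PathC n, PathIn Ω γ ∧ ∃ I ∈ SGamma Ω γ, psi I (γ 1) = q

/-- `Ω₂` is `Ω₁`-stem-preserving. -/
def StemPreserving {n : ℕ} (Ω₁ Ω₂ : Set (Fin n → ℍ[ℝ])) : Prop :=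
  (∀ γ : PathC n, PathIn Ω₁ γ → (SGamma Ω₂ γ).Nontrivial) ∧
  (∀ α β : PathC n, PathIn Ω₁ α → PathIn Ω₁ β → α 1 = β 1 →
    ¬ ∃ I, SGamma Ω₂ α ∩ SGamma Ω₂ β = {I})

/-- `Ω` is self-stem-preserving. -/
def SelfStemPreserving {n : ℕ} (Ω : Set (Fin n → ℍ[ℝ])) : Prop :=
  RealPathConnected Ω ∧ StemPreserving Ω Ω

/-- The map `𝕴 : ℍ_sⁿ → 𝕊 ∪ {0}`. -/
def frakI {n : ℕ} (q : Fin n → ℍ[ℝ]) : ℍ[ℝ] :=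
  if h : ∀ k, IsRealQ (q k) then 0
  else
    let k := (Finset.univ.filter fun k => ¬ IsRealQ (q k)).min' (by
      push_neg at h
      obtain ⟨k, hk⟩ := h
      exact ⟨k, Finset.mem_filter.mpr ⟨Finset.mem_univ k, hk⟩⟩)
    ‖q k - ((q k).re : ℍ[ℝ])‖⁻¹ • (q k - ((q k).re : ℍ[ℝ]))

/-- A choice of path-slice stem function of `f` (on paths in `Ω`); by
the results of Dou–Jin–Ren–Yang its restriction to `𝒫(ℂⁿ, Ω₁)` is the canonical `F^f_{Ω₁}`. -/
def stemOf {n : ℕ} (Ω : Set (Fin n → ℍ[ℝ])) (f : (Fin n → ℍ[ℝ]) → ℍ[ℝ]) :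
    PathC n → ℍ[ℝ] × ℍ[ℝ] :=
  Classical.epsilon (IsStem Ω f)

/-- The function `ℱ^f_{Ω₁} : Ω₁ → ℍ²` induced by the stem of `f` (path-slice on `Ω₂`). -/
def scrF {n : ℕ} (Ω₁ Ω₂ : Set (Fin n → ℍ[ℝ])) (f : (Fin n → ℍ[ℝ]) → ℍ[ℝ])
    (q : Fin n → ℍ[ℝ]) : ℍ[ℝ] × ℍ[ℝ] :=
  if ∀ k, IsRealQ (q k) then (f q, 0)
  else stemOf Ω₂ f (Classical.epsilon (fun γ : PathC n =>
    PathIn Ω₁ γ ∧ pathInSlice Ω₁ (frakI q) γ ∧ psi (frakI q) (γ 1) = q))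

/-- The `Ω₁`-slice conjugation `f^c_{Ω₁}`. -/
def sliceConj {n : ℕ} (Ω₁ Ω₂ : Set (Fin n → ℍ[ℝ])) (f : (Fin n → ℍ[ℝ]) → ℍ[ℝ]) :
    (Fin n → ℍ[ℝ]) → ℍ[ℝ] :=
  fun q => star (scrF Ω₁ Ω₂ f q).1 + frakI q * star (scrF Ω₁ Ω₂ f q).2

/-- The `*`-product `g * f` of a path-slice `g : Ω₁ → ℍ` with `f : Ω₂ → ℍ`. -/
def starProdF {n : ℕ} (Ω₁ Ω₂ : Set (Fin n → ℍ[ℝ])) (g f : (Fin n → ℍ[ℝ]) → ℍ[ℝ]) :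
    (Fin n → ℍ[ℝ]) → ℍ[ℝ] :=
  fun q => g q * (scrF Ω₁ Ω₂ f q).1 + frakI q * g q * (scrF Ω₁ Ω₂ f q).2

/-- The symmetrization `f^s_{Ω₁} = f^c_{Ω₁} * f`. -/
def symmF {n : ℕ} (Ω₁ Ω₂ : Set (Fin n → ℍ[ℝ])) (f : (Fin n → ℍ[ℝ]) → ℍ[ℝ]) :
    (Fin n → ℍ[ℝ]) → ℍ[ℝ] :=
  starProdF Ω₁ Ω₂ (sliceConj Ω₁ Ω₂ f) f

/-- The pointwise `*`-product on `ℍ²`. -/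
def starPair (p q : ℍ[ℝ] × ℍ[ℝ]) : ℍ[ℝ] × ℍ[ℝ] :=
  (p.1 * q.1 - p.2 * q.2, p.2 * q.1 + p.1 * q.2)

/-- Slice-open sets: every slice is open (pulled back to `ℂⁿ` via `Ψ_i^I`). -/
def SliceOpen {n : ℕ} (U : Set (Fin n → ℍ[ℝ])) : Prop :=
  ∀ I ∈ SQ, IsOpen {z : Fin n → ℂ | psi I z ∈ U}

/-- Weakly slice regular functions: each slice restriction is left `I`-holomorphic. -/
def SliceRegular {n : ℕ} (Ω : Set (Fin n → ℍ[ℝ])) (f : (Fin n → ℍ[ℝ]) → ℍ[ℝ]) : Prop :=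
  ∀ I ∈ SQ, ∀ z : Fin n → ℂ, psi I z ∈ Ω →
    DifferentiableWithinAt ℝ (fun w => f (psi I w)) {w | psi I w ∈ Ω} z ∧
    ∀ ℓ : Fin n,
      fderivWithin ℝ (fun w => f (psi I w)) {w | psi I w ∈ Ω} z (Pi.single ℓ 1)
        + I * fderivWithin ℝ (fun w => f (psi I w)) {w | psi I w ∈ Ω} z (Pi.single ℓ Complex.I)
        = 0

/-- The ball `B_I(q, r)` inside the slice `ℂ_Iⁿ`. -/
def BI {n : ℕ} (I : ℍ[ℝ]) (q : Fin n → ℍ[ℝ]) (r : ℝ) : Set (Fin n → ℍ[ℝ]) :=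
  {p | p ∈ Set.range (psi (n := n) I) ∧ dist p q < r}

/-- The slice topology. -/
def sliceTop (n : ℕ) : TopologicalSpace (Fin n → ℍ[ℝ]) where
  IsOpen := SliceOpen
  isOpen_univ := by intro I _; simpa using isOpen_univ
  isOpen_inter := by
    intro s t hs ht I hI
    have h : {z : Fin n → ℂ | psi I z ∈ s ∩ t}
        = {z : Fin n → ℂ | psi I z ∈ s} ∩ {z : Fin n → ℂ | psi I z ∈ t} := by
      ext z; simp [Set.mem_inter_iff]
    rw [h]
    exact (hs I hI).inter (ht I hI)
  isOpen_sUnion := by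
    intro S hS I hI
    have h : {z : Fin n → ℂ | psi I z ∈ ⋃₀ S} = ⋃ s ∈ S, {z : Fin n → ℂ | psi I z ∈ s} := by
      ext z; simp
    rw [h]
    exact isOpen_biUnion fun s hs => hS s hs I hI

/-- Slice-domains: nonempty slice-open sets connected in the slice topology. -/
def SliceDomain {n : ℕ} (Ω : Set (Fin n → ℍ[ℝ])) : Prop :=
  SliceOpen Ω ∧ @IsConnected _ (sliceTop n) Ω

/-- Concatenation `γ · ℒ_{γ(1)}^z` of a path with the segment from `γ(1)` to `z`. -/
def concatSeg {n : ℕ} (γ : PathC n) (z : Fin n → ℂ) : PathC n := fun t =>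
  if h : (t : ℝ) ≤ 1 / 2 then
    γ ⟨2 * (t : ℝ), ⟨by linarith [t.2.1], by linarith⟩⟩
  else
    (1 - (2 * (t : ℝ) - 1)) • γ 1 + (2 * (t : ℝ) - 1) • z

/-- The action of `σ` on `ℍ²`: `σ(p₁, p₂) = (-p₂, p₁)`. -/
def sigmaAct (p : ℍ[ℝ] × ℍ[ℝ]) : ℍ[ℝ] × ℍ[ℝ] := (-p.2, p.1)

/-- `F : 𝒫(ℂⁿ, Ω) → ℍ²` is holomorphic at the path `γ`. -/
def StemHoloAt {n : ℕ} (Ω : Set (Fin n → ℍ[ℝ])) (F : PathC n → ℍ[ℝ] × ℍ[ℝ])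
    (γ : PathC n) : Prop :=
  ∃ r > 0, (∀ z ∈ Metric.ball (γ 1) r, PathIn Ω (concatSeg γ z)) ∧
    ∀ z ∈ Metric.ball (γ 1) r,
      DifferentiableAt ℝ (fun w => F (concatSeg γ w)) z ∧
      ∀ ℓ : Fin n,
        fderiv ℝ (fun w => F (concatSeg γ w)) z (Pi.single ℓ 1)
          + sigmaAct (fderiv ℝ (fun w => F (concatSeg γ w)) z (Pi.single ℓ Complex.I)) = 0

/-- `F` is holomorphic (at every path of `𝒫(ℂⁿ, Ω)`). -/
def StemHolo {n : ℕ} (Ω : Set (Fin n → ℍ[ℝ])) (F : PathC n → ℍ[ℝ] × ℍ[ℝ]) : Prop :=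
  ∀ γ, PathIn Ω γ → StemHoloAt Ω F γ

/-- `E` is a complex-analytic subset of the open set `U ⊂ ℂⁿ`. -/
def IsComplexAnalyticSubset {n : ℕ} (U E : Set (Fin n → ℂ)) : Prop :=
  E ⊆ U ∧ ∀ z ∈ U, ∃ V, V ⊆ U ∧ IsOpen V ∧ z ∈ V ∧
    ∃ (m : ℕ) (h : Fin m → (Fin n → ℂ) → ℂ),
      (∀ j, DifferentiableOn ℂ (h j) V) ∧ E ∩ V = {w | w ∈ V ∧ ∀ j, h j w = 0}

/-- `A` is a path-slice analytic subset of the slice-domain `Ω`. -/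
def PathSliceAnalytic {n : ℕ} (Ω A : Set (Fin n → ℍ[ℝ])) : Prop :=
  A = Ω ∨ ∀ γ : PathC n, PathIn Ω γ →
    ∃ r > 0, ∃ rI : ℍ[ℝ] → ℝ, (∀ I ∈ SGamma Ω γ, rI I ∈ Set.Ioc (0 : ℝ) r) ∧
      ∃ E : Set (Fin n → ℂ), IsComplexAnalyticSubset (Metric.ball (γ 1) r) E ∧
        E ≠ Metric.ball (γ 1) r ∧
        ∀ I ∈ SGamma Ω γ, A ∩ BI I (psi I (γ 1)) (rI I) ⊆ psi I '' E


lemma SQ_re_zero {I : ℍ[ℝ]} (h : I ∈ SQ) : I.re = 0 := by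
  have h' : I * I = -1 := by rw [← sq]; exact h
  have e0 : I.re * I.re - I.imI * I.imI - I.imJ * I.imJ - I.imK * I.imK = -1 := by
    have := congrArg QuaternionAlgebra.re h'; simpa [Quaternion.re_mul] using this
  have e1 : I.re * I.imI + I.imI * I.re + I.imJ * I.imK - I.imK * I.imJ = 0 := by
    have := congrArg QuaternionAlgebra.imI h'; simpa [Quaternion.imI_mul] using this
  have e2 : I.re * I.imJ - I.imI * I.imK + I.imJ * I.re + I.imK * I.imI = 0 := by
    have := congrArg QuaternionAlgebra.imJ h'; simpa [Quaternion.imJ_mul] using this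
  have e3 : I.re * I.imK + I.imI * I.imJ - I.imJ * I.imI + I.imK * I.re = 0 := by
    have := congrArg QuaternionAlgebra.imK h'; simpa [Quaternion.imK_mul] using this
  by_contra hre
  have hi : I.imI = 0 := by
    have : (2 * I.re) * I.imI = 0 := by linarith
    rcases mul_eq_zero.1 this with h | h
    · exact absurd (by linarith : I.re = 0) hre
    · exact h
  have hj : I.imJ = 0 := by
    have : (2 * I.re) * I.imJ = 0 := by linarith
    rcases mul_eq_zero.1 this with h | h
    · exact absurd (by linarith : I.re = 0) hre
    · exact h
  have hk : I.imK = 0 := by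
    have : (2 * I.re) * I.imK = 0 := by linarith
    rcases mul_eq_zero.1 this with h | h
    · exact absurd (by linarith : I.re = 0) hre
    · exact h
  rw [hi, hj, hk] at e0
  nlinarith [sq_nonneg I.re]

lemma SQ_ne_zero {I : ℍ[ℝ]} (h : I ∈ SQ) : I ≠ 0 := by
  intro h0
  have : (0 : ℍ[ℝ]) = -1 := by simpa [h0] using h.symm
  have := congrArg QuaternionAlgebra.re this
  norm_num at this

lemma SQ_neg {I : ℍ[ℝ]} (h : I ∈ SQ) : -I ∈ SQ := by
  simpa [SQ, neg_sq] using h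

lemma coeff_unique {I : ℍ[ℝ]} (h : I ∈ SQ) {x y x' y' : ℝ}
    (e : (x:ℍ[ℝ]) + y • I = (x':ℍ[ℝ]) + y' • I) : x = x' ∧ y = y' := by
  have hre := SQ_re_zero h
  have hx : x = x' := by
    have := congrArg QuaternionAlgebra.re e
    simpa [Quaternion.re_smul, hre] using this
  have hy : y = y' := by
    have e2 : (y - y') • I = 0 := by
      have : y • I = y' • I := by
        have := e; rw [hx] at this; exact add_left_cancel this
      rw [sub_smul, this, sub_self]
    rcases smul_eq_zero.1 e2 with h0 | h0
    · linarith [sub_eq_zero.1 (by linarith [h0] : y - y' = 0)]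
    · exact absurd h0 (SQ_ne_zero h)
  exact ⟨hx, hy⟩

lemma isRealQ_iff {I : ℍ[ℝ]} (h : I ∈ SQ) (x y : ℝ) :
    IsRealQ ((x:ℍ[ℝ]) + y • I) ↔ y = 0 := by
  constructor
  · rintro ⟨r, hr⟩
    have : (x:ℍ[ℝ]) + y • I = (r:ℍ[ℝ]) + (0:ℝ) • I := by simpa using hr
    exact (coeff_unique h this).2
  · intro hy; exact ⟨x, by simp [hy]⟩

lemma psi_inj {n : ℕ} {I : ℍ[ℝ]} (h : I ∈ SQ) :
    Function.Injective (psi (n := n) I) := by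
  intro z w e
  funext k
  have ek : ((z k).re : ℍ[ℝ]) + (z k).im • I = ((w k).re : ℍ[ℝ]) + (w k).im • I :=
    congrFun e k
  obtain ⟨h1, h2⟩ := coeff_unique h ek
  exact Complex.ext h1 h2

lemma psi_conj {n : ℕ} (I : ℍ[ℝ]) (z : Fin n → ℂ) :
    psi I (fun k => (starRingEnd ℂ) (z k)) = psi (-I) z := by
  funext k
  simp [psi, Complex.conj_re, Complex.conj_im, neg_smul, smul_neg]

lemma SQ_norm {I : ℍ[ℝ]} (h : I ∈ SQ) : ‖I‖ = 1 := by
  have h' : I * I = -1 := by rw [← sq]; exact h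
  have : ‖I‖ * ‖I‖ = 1 := by
    rw [← norm_mul, h']; simp
  nlinarith [norm_nonneg I]

lemma cancel_pair {J K a b a' b' : ℍ[ℝ]} (hJK : J ≠ K)
    (e1 : a + J * b = a' + J * b') (e2 : a + K * b = a' + K * b') :
    a = a' ∧ b = b' := by
  have h4 : J * b - K * b = J * b' - K * b' := by
    have := congrArg₂ (fun u v : ℍ[ℝ] => u - v) e1 e2
    simpa [add_sub_add_left_eq_sub] using this
  have h3 : (J - K) * b = (J - K) * b' := by
    rw [sub_mul, sub_mul]; exact h4
  have hb : b = b' := mul_left_cancel₀ (sub_ne_zero.2 hJK) h3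
  refine ⟨?_, hb⟩
  have := e1; rw [hb] at this
  exact add_right_cancel this

def concatRev {n : ℕ} (α β : PathC n) : PathC n := fun t =>
  if (t : ℝ) ≤ 1/2 then α (Set.projIcc 0 1 zero_le_one (2 * (t:ℝ)))
  else β (Set.projIcc 0 1 zero_le_one (2 - 2 * (t:ℝ)))

lemma concatRev_cont {n : ℕ} {α β : PathC n} (hα : Continuous α) (hβ : Continuous β)
    (h1 : α 1 = β 1) : Continuous (concatRev α β) := by
  apply Continuous.if_le
  · exact hα.comp (continuous_projIcc.comp (by continuity))
  · exact hβ.comp (continuous_projIcc.comp (by continuity))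
  · exact continuous_subtype_val
  · exact continuous_const
  · intro t ht
    have h2 : (2 * (t:ℝ)) = 1 := by rw [ht]; ring
    have h3 : (2 - 2*(t:ℝ)) = 1 := by rw [ht]; ring
    rw [h3, h2]
    have hp : Set.projIcc (0:ℝ) 1 zero_le_one 1 = 1 := by
      rw [Set.projIcc_right]; rfl
    rw [hp, h1]

lemma concatRev_zero {n : ℕ} (α β : PathC n) : concatRev α β 0 = α 0 := by
  have h0 : ((0 : unitInterval) : ℝ) = 0 := rfl
  simp only [concatRev, h0]
  rw [if_pos (by norm_num)]
  rw [show (2 : ℝ) * 0 = 0 by ring]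
  rw [Set.projIcc_left]; rfl

lemma concatRev_slice_fst {n : ℕ} {Ω : Set (Fin n → ℍ[ℝ])} {α β : PathC n} {J : ℍ[ℝ]}
    (h : pathInSlice Ω J (concatRev α β)) : pathInSlice Ω J α := by
  intro s
  have hb : ((s:ℝ)/2) ∈ Set.Icc (0:ℝ) 1 := ⟨by linarith [s.2.1], by linarith [s.2.2]⟩
  have hm := h ⟨_, hb⟩
  have he : concatRev α β ⟨(s:ℝ)/2, hb⟩ = α s := by
    simp only [concatRev]
    rw [if_pos (show (((⟨(s:ℝ)/2, hb⟩ : unitInterval)):ℝ) ≤ 1/2 by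
      simp only []; linarith [s.2.2])]
    rw [show 2 * ((s:ℝ)/2) = (s:ℝ) by ring, Set.projIcc_of_mem _ s.2]
  rwa [he] at hm

lemma concatRev_slice_snd {n : ℕ} {Ω : Set (Fin n → ℍ[ℝ])} {α β : PathC n} {J : ℍ[ℝ]}
    (h : pathInSlice Ω J (concatRev α β)) (h1 : α 1 = β 1) : pathInSlice Ω J β := by
  intro s
  by_cases hs : (s:ℝ) < 1
  · have hb : (1 - (s:ℝ)/2) ∈ Set.Icc (0:ℝ) 1 := ⟨by linarith [s.2.2], by linarith [s.2.1]⟩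
    have hm := h ⟨_, hb⟩
    have he : concatRev α β ⟨1 - (s:ℝ)/2, hb⟩ = β s := by
      simp only [concatRev]
      rw [if_neg (show ¬ (((⟨1 - (s:ℝ)/2, hb⟩ : unitInterval)):ℝ) ≤ 1/2 by
        simp only []; push_neg; linarith)]
      rw [show 2 - 2 * (1 - (s:ℝ)/2) = (s:ℝ) by ring, Set.projIcc_of_mem _ s.2]
    rwa [he] at hm
  · have hs1 : s = 1 := Subtype.ext (le_antisymm s.2.2 (not_lt.1 hs))
    subst hs1
    have hb : ((1:ℝ)/2) ∈ Set.Icc (0:ℝ) 1 := by norm_num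
    have hm := h ⟨_, hb⟩
    have he : concatRev α β ⟨(1:ℝ)/2, hb⟩ = α 1 := by
      simp only [concatRev]
      rw [if_pos (le_refl _)]
      rw [show 2 * ((1:ℝ)/2) = (1:ℝ) by ring, Set.projIcc_right]; rfl
    rw [he, h1] at hm
    exact hm

lemma stem_spec {n : ℕ} {Ω₂ : Set (Fin n → ℍ[ℝ])} {f : (Fin n → ℍ[ℝ]) → ℍ[ℝ]}
    (hf : PathSlice Ω₂ f) : IsStem Ω₂ f (stemOf Ω₂ f) :=
  Classical.epsilon_spec hf

lemma stem_eval {n : ℕ} {Ω₂ : Set (Fin n → ℍ[ℝ])} {f : (Fin n → ℍ[ℝ]) → ℍ[ℝ]}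
    (hf : PathSlice Ω₂ f) {γ : PathC n} (hP : IsPathP γ) {J : ℍ[ℝ]}
    (hJ : J ∈ SGamma Ω₂ γ) :
    f (psi J (γ 1)) = (stemOf Ω₂ f γ).1 + J * (stemOf Ω₂ f γ).2 :=
  stem_spec hf γ ⟨hP, J, hJ⟩ J hJ

lemma stem_coherence {n : ℕ} {Ω₁ Ω₂ : Set (Fin n → ℍ[ℝ])}
    (hsp : StemPreserving Ω₁ Ω₂) {f : (Fin n → ℍ[ℝ]) → ℍ[ℝ]} (hf : PathSlice Ω₂ f)
    {α β : PathC n} (hα : IsPathP α) (hβ : IsPathP β) (h11 : α 1 = β 1)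
    {J₀ : ℍ[ℝ]} (hJ₀ : J₀ ∈ SQ) (hsα : pathInSlice Ω₁ J₀ α) (hsβ : pathInSlice Ω₁ J₀ β) :
    stemOf Ω₂ f α = stemOf Ω₂ f β := by
  have hτc : Continuous (concatRev α β) := concatRev_cont hα.1 hβ.1 h11
  have hτ0 : ∀ k, ((concatRev α β 0) k).im = 0 := by
    rw [concatRev_zero]; exact hα.2
  have hτP : IsPathP (concatRev α β) := ⟨hτc, hτ0⟩
  have hτslice : pathInSlice Ω₁ J₀ (concatRev α β) := by
    intro t
    simp only [concatRev]
    split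
    · exact hsα _
    · exact hsβ _
  have hτin : PathIn Ω₁ (concatRev α β) := ⟨hτP, J₀, hJ₀, hτslice⟩
  obtain ⟨J, hJ, K, hK, hJK⟩ := hsp.1 (concatRev α β) hτin
  have hJα : J ∈ SGamma Ω₂ α := ⟨hJ.1, concatRev_slice_fst hJ.2⟩
  have hKα : K ∈ SGamma Ω₂ α := ⟨hK.1, concatRev_slice_fst hK.2⟩
  have hJβ : J ∈ SGamma Ω₂ β := ⟨hJ.1, concatRev_slice_snd hJ.2 h11⟩
  have hKβ : K ∈ SGamma Ω₂ β := ⟨hK.1, concatRev_slice_snd hK.2 h11⟩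
  have eJα := stem_eval hf hα hJα
  have eKα := stem_eval hf hα hKα
  have eJβ := stem_eval hf hβ hJβ
  have eKβ := stem_eval hf hβ hKβ
  rw [h11] at eJα eKα
  have e1 : (stemOf Ω₂ f α).1 + J * (stemOf Ω₂ f α).2
      = (stemOf Ω₂ f β).1 + J * (stemOf Ω₂ f β).2 := by rw [← eJα, ← eJβ]
  have e2 : (stemOf Ω₂ f α).1 + K * (stemOf Ω₂ f α).2
      = (stemOf Ω₂ f β).1 + K * (stemOf Ω₂ f β).2 := by rw [← eKα, ← eKβ]
  obtain ⟨ha, hb⟩ := cancel_pair hJK e1 e2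
  exact Prod.ext ha hb

lemma isPathP_conj {n : ℕ} {γ : PathC n} (hγ : IsPathP γ) :
    IsPathP (fun t k => (starRingEnd ℂ) (γ t k)) := by
  constructor
  · apply continuous_pi
    intro k
    exact Complex.continuous_conj.comp ((continuous_apply k).comp hγ.1)
  · intro k
    simp [hγ.2 k]

lemma stem_conj {n : ℕ} {Ω₁ Ω₂ : Set (Fin n → ℍ[ℝ])}
    (hsp : StemPreserving Ω₁ Ω₂) {f : (Fin n → ℍ[ℝ]) → ℍ[ℝ]} (hf : PathSlice Ω₂ f)
    {γ : PathC n} (hγ : PathIn Ω₁ γ) :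
    stemOf Ω₂ f (fun t k => (starRingEnd ℂ) (γ t k))
      = ((stemOf Ω₂ f γ).1, -(stemOf Ω₂ f γ).2) := by
  obtain ⟨J, hJ, K, hK, hJK⟩ := hsp.1 γ hγ
  set δ : PathC n := fun t k => (starRingEnd ℂ) (γ t k) with hδ
  have hδP : IsPathP δ := isPathP_conj hγ.1
  have hδsl : ∀ {L : ℍ[ℝ]}, L ∈ SGamma Ω₂ γ → -L ∈ SGamma Ω₂ δ := by
    intro L hL
    refine ⟨SQ_neg hL.1, fun t => ?_⟩
    have : psi (-L) (δ t) = psi L (γ t) := by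
      show psi (-L) (fun k => (starRingEnd ℂ) (γ t k)) = psi L (γ t)
      rw [psi_conj, neg_neg]
    rw [this]
    exact hL.2 t
  have hψ : ∀ L : ℍ[ℝ], psi (-L) (δ 1) = psi L (γ 1) := by
    intro L
    show psi (-L) (fun k => (starRingEnd ℂ) (γ 1 k)) = psi L (γ 1)
    rw [psi_conj, neg_neg]
  have eJγ := stem_eval hf hγ.1 hJ
  have eKγ := stem_eval hf hγ.1 hK
  have eJδ := stem_eval hf hδP (hδsl hJ)
  have eKδ := stem_eval hf hδP (hδsl hK)
  rw [hψ J] at eJδ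
  rw [hψ K] at eKδ
  have e1 : (stemOf Ω₂ f δ).1 + J * (-(stemOf Ω₂ f δ).2)
      = (stemOf Ω₂ f γ).1 + J * (stemOf Ω₂ f γ).2 := by
    rw [mul_neg, ← neg_mul, ← eJγ, ← eJδ]
  have e2 : (stemOf Ω₂ f δ).1 + K * (-(stemOf Ω₂ f δ).2)
      = (stemOf Ω₂ f γ).1 + K * (stemOf Ω₂ f γ).2 := by
    rw [mul_neg, ← neg_mul, ← eKγ, ← eKδ]
  obtain ⟨ha, hb⟩ := cancel_pair hJK e1 e2
  exact Prod.ext ha (by rw [← hb, neg_neg])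

lemma frakI_spec {n : ℕ} (q : Fin n → ℍ[ℝ]) (h : ¬ ∀ k, IsRealQ (q k)) :
    ∃ k, ¬ IsRealQ (q k) ∧
      frakI q = ‖q k - ((q k).re : ℍ[ℝ])‖⁻¹ • (q k - ((q k).re : ℍ[ℝ])) := by
  have hne : (Finset.univ.filter fun k => ¬ IsRealQ (q k)).Nonempty := by
    obtain ⟨k0, hk0⟩ := not_forall.1 h
    exact ⟨k0, Finset.mem_filter.mpr ⟨Finset.mem_univ _, hk0⟩⟩
  refine ⟨(Finset.univ.filter fun k => ¬ IsRealQ (q k)).min' hne,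
    (Finset.mem_filter.1 (Finset.min'_mem _ hne)).2, ?_⟩
  rw [frakI, dif_neg h]

/-- the three expressions built from conjugated stem values agree. -/
theorem conj_stem_relations {n : ℕ} (Ω₁ Ω₂ : Set (Fin n → ℍ[ℝ]))
    (h1 : Ω₁ ⊆ HSliceCone n) (h2 : Ω₂ ⊆ HSliceCone n)
    (hrpc : RealPathConnected Ω₁) (hsp : StemPreserving Ω₁ Ω₂)
    (c : ℍ[ℝ]) (f : (Fin n → ℍ[ℝ]) → ℍ[ℝ]) (hf : PathSlice Ω₂ f)
    (γ : PathC n) (hγ : PathIn Ω₁ γ) (I : ℍ[ℝ]) (hI : I ∈ SGamma Ω₁ γ) :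
    (c * star (stemOf Ω₂ f γ).1 + I * c * star (stemOf Ω₂ f γ).2
        = c * star (stemOf Ω₂ f (fun t k => (starRingEnd ℂ) (γ t k))).1
          - I * c * star (stemOf Ω₂ f (fun t k => (starRingEnd ℂ) (γ t k))).2) ∧
    (c * star (stemOf Ω₂ f γ).1 + I * c * star (stemOf Ω₂ f γ).2
        = c * star (scrF Ω₁ Ω₂ f (psi I (γ 1))).1
          + frakI (psi I (γ 1)) * c * star (scrF Ω₁ Ω₂ f (psi I (γ 1))).2) := by
  obtain ⟨hISQ, hIsl⟩ := hI
  have hconj := stem_conj hsp hf hγ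
  constructor
  · rw [hconj]
    simp [star_neg, mul_neg, sub_neg_eq_add]
  · set q := psi I (γ 1) with hq
    by_cases hreal : ∀ k, IsRealQ (q k)
    · have him : ∀ k, (γ 1 k).im = 0 := by
        intro k
        exact (isRealQ_iff hISQ ((γ 1 k).re) ((γ 1 k).im)).1 (hreal k)
      obtain ⟨J, hJ, K, hK, hJK⟩ := hsp.1 γ hγ
      have hpsiJ : ∀ L : ℍ[ℝ], psi L (γ 1) = q := by
        intro L
        funext j
        show ((γ 1 j).re : ℍ[ℝ]) + (γ 1 j).im • L = ((γ 1 j).re : ℍ[ℝ]) + (γ 1 j).im • I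
        rw [him j]
        simp
      have eJ := stem_eval hf hγ.1 hJ
      have eK := stem_eval hf hγ.1 hK
      rw [hpsiJ J] at eJ
      rw [hpsiJ K] at eK
      have e1 : (stemOf Ω₂ f γ).1 + J * (stemOf Ω₂ f γ).2 = f q + J * 0 := by
        rw [mul_zero, add_zero, ← eJ]
      have e2 : (stemOf Ω₂ f γ).1 + K * (stemOf Ω₂ f γ).2 = f q + K * 0 := by
        rw [mul_zero, add_zero, ← eK]
      obtain ⟨ha, hb⟩ := cancel_pair hJK e1 e2
      rw [scrF, if_pos hreal]
      simp [ha, hb]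
    · obtain ⟨k, hnr, hfrak⟩ := frakI_spec q hreal
      have hqk : q k = ((γ 1 k).re : ℍ[ℝ]) + (γ 1 k).im • I := rfl
      set y := (γ 1 k).im with hy
      have hyne : y ≠ 0 := by
        intro h0
        exact hnr (by rw [hqk, h0]; exact (isRealQ_iff hISQ _ _).2 rfl)
      have hqre : (q k).re = (γ 1 k).re := by
        rw [hqk]
        simp [Quaternion.re_smul, SQ_re_zero hISQ]
      have hsub : q k - ((q k).re : ℍ[ℝ]) = y • I := by
        rw [hqre, hqk, add_sub_cancel_left]
      rw [hsub, norm_smul, SQ_norm hISQ, Real.norm_eq_abs, mul_one, smul_smul] at hfrak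
      rcases hyne.lt_or_gt with hneg | hpos
      · have hJ0 : frakI q = -I := by
          rw [hfrak, abs_of_neg hneg, show (-y)⁻¹ * y = -1 by field_simp]
          simp
        rw [scrF, if_neg hreal, hJ0]
        set δ : PathC n := fun t j => (starRingEnd ℂ) (γ t j) with hδdef
        have hδP : IsPathP δ := isPathP_conj hγ.1
        have hδsl : pathInSlice Ω₁ (-I) δ := by
          intro t
          have hh : psi (-I) (δ t) = psi I (γ t) := by
            show psi (-I) (fun j => (starRingEnd ℂ) (γ t j)) = psi I (γ t)
            rw [psi_conj, neg_neg]
          rw [hh]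
          exact hIsl t
        have hψδ : psi (-I) (δ 1) = q := by
          have hh : psi (-I) (δ 1) = psi I (γ 1) := by
            show psi (-I) (fun j => (starRingEnd ℂ) (γ 1 j)) = psi I (γ 1)
            rw [psi_conj, neg_neg]
          rw [hh, hq]
        have hδin : PathIn Ω₁ δ := ⟨hδP, -I, SQ_neg hISQ, hδsl⟩
        have hEX : ∃ γ' : PathC n, PathIn Ω₁ γ' ∧ pathInSlice Ω₁ (-I) γ' ∧
            psi (-I) (γ' 1) = q := ⟨δ, hδin, hδsl, hψδ⟩
        set β := Classical.epsilon (fun γ' : PathC n => PathIn Ω₁ γ' ∧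
          pathInSlice Ω₁ (-I) γ' ∧ psi (-I) (γ' 1) = q) with hβdef
        have hβ := Classical.epsilon_spec hEX
        have hb1 : β 1 = δ 1 := psi_inj (SQ_neg hISQ) (hβ.2.2.trans hψδ.symm)
        have hcoh : stemOf Ω₂ f β = stemOf Ω₂ f δ :=
          stem_coherence hsp hf hβ.1.1 hδP hb1 (SQ_neg hISQ) hβ.2.1 hδsl
        rw [hcoh, hconj]
        simp [star_neg, mul_neg, neg_mul, neg_neg]
      · have hJ0 : frakI q = I := by
          rw [hfrak, abs_of_pos hpos, show y⁻¹ * y = 1 by field_simp]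
          simp
        rw [scrF, if_neg hreal, hJ0]
        have hEX : ∃ γ' : PathC n, PathIn Ω₁ γ' ∧ pathInSlice Ω₁ I γ' ∧
            psi I (γ' 1) = q := ⟨γ, hγ, hIsl, hq.symm⟩
        set β := Classical.epsilon (fun γ' : PathC n => PathIn Ω₁ γ' ∧
          pathInSlice Ω₁ I γ' ∧ psi I (γ' 1) = q) with hβdef
        have hβ := Classical.epsilon_spec hEX
        have hb1 : β 1 = γ 1 := psi_inj hISQ (hβ.2.2.trans hq)
        have hcoh : stemOf Ω₂ f β = stemOf Ω₂ f γ :=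
          stem_coherence hsp hf hβ.1.1 hγ.1 hb1 hISQ hβ.2.1 hIsl
        rw [hcoh]

end
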